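/- For every integer j ≥ 0 there exists a polynomial r_j ∈ K[X] of degree exactly j (with coefficients lying in the subring generated by q and q^{−1}) such that for every k ∈ ℤ one has {k}_q · {k−1}_q ⋯ {k−j+1}_q = r_j({k}_q), the left-hand side being the empty product 1 when j = 0. -/

import Mathlib

open Polynomial
open scoped Classical

noncomputable section

/-- The q-integer {n}_q. -/
def qInt (K : Type*) [Field K] (q : K) (n : ℤ) : K :=
  if q = 1 then (n : K) else (q ^ n - 1) / (q - 1)

/-- The multiplication operator `M` on formal Laurent series `L = ℤ → K`:
`(M a)(n) = a(n-1)`. -/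
def Mop (K : Type*) [Field K] : Module.End K (ℤ → K) where
  toFun a := fun n => a (n - 1)
  map_add' _ _ := rfl
  map_smul' _ _ := rfl

/-- The q-difference operator `D_q` on `L = ℤ → K`: `(D_q a)(n) = {n+1}_q · a(n+1)`. -/
def Dq (K : Type*) [Field K] (q : K) : Module.End K (ℤ → K) where
  toFun a := fun n => qInt K q (n + 1) * a (n + 1)
  map_add' x y := by funext n; simp [Pi.add_apply, mul_add]
  map_smul' c x := by funext n; simp [Pi.smul_apply, smul_eq_mul]; ring


lemma qInt_natCast (K : Type*) [Field K] (q : K) (n : ℕ) :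
    qInt K q (n : ℤ) = ∑ m ∈ Finset.range n, q ^ m := by
  unfold qInt
  split_ifs with h
  · simp [h]
  · rw [geom_sum_eq h, zpow_natCast]

lemma qInt_mem_closure (K : Type*) [Field K] (q : K) (n : ℕ) :
    qInt K q (n : ℤ) ∈ Subring.closure ({q, q⁻¹} : Set K) := by
  rw [qInt_natCast]
  exact Subring.sum_mem _ fun m _ =>
    Subring.pow_mem _ (Subring.subset_closure (by simp)) m

lemma qInt_sub (K : Type*) [Field K] (q : K) (hq : q ≠ 0) (k : ℤ) (i : ℕ) :
    qInt K q (k - (i : ℤ)) = q⁻¹ ^ i * (qInt K q k - qInt K q (i : ℤ)) := by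
  unfold qInt
  split_ifs with h
  · simp [h]
  · rw [zpow_sub₀ hq, zpow_natCast, inv_pow]
    have h1 : q - 1 ≠ 0 := sub_ne_zero.mpr h
    have h2 : q ^ i ≠ 0 := pow_ne_zero _ hq
    field_simp
    ring

lemma coeff_prod_mem (K : Type*) [Field K] (S : Subring K) (s : Finset ℕ) (f : ℕ → K[X])
    (h : ∀ i ∈ s, ∀ n, (f i).coeff n ∈ S) : ∀ n, (∏ i ∈ s, f i).coeff n ∈ S := by
  classical
  induction s using Finset.induction_on with
  | empty => intro n; simp [Polynomial.coeff_one]; split_ifs; exacts [S.one_mem, S.zero_mem]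
  | @insert a s' hx ih =>
    intro n
    rw [Finset.prod_insert hx, Polynomial.coeff_mul]
    exact Subring.sum_mem _ fun p hp =>
      S.mul_mem (h a (Finset.mem_insert_self _ _) _)
        (ih (fun i hi => h i (Finset.mem_insert_of_mem hi)) _)

/-- for every `j ≥ 0` there is a polynomial `r_j` of degree exactly `j`,
with coefficients in the subring generated by `q` and `q⁻¹`, such that
`{k}_q {k−1}_q ⋯ {k−j+1}_q = r_j({k}_q)` for all `k ∈ ℤ`. -/
theorem qfactorial_poly (K : Type*) [Field K] (q : K) (hq : q ≠ 0)
    (hqi : ∀ n : ℤ, n ≠ 0 → qInt K q n ≠ 0) (j : ℕ) :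
    ∃ r : K[X], r.degree = (j : ℕ) ∧
      (∀ i : ℕ, r.coeff i ∈ Subring.closure ({q, q⁻¹} : Set K)) ∧
      ∀ k : ℤ, (∏ i ∈ Finset.range j, qInt K q (k - (i : ℤ))) = r.eval (qInt K q k) := by
  have hqiS : q⁻¹ ∈ Subring.closure ({q, q⁻¹} : Set K) := Subring.subset_closure (by simp)
  refine ⟨∏ i ∈ Finset.range j, (C (q⁻¹ ^ i) * (X - C (qInt K q (i : ℤ)))), ?_, ?_, ?_⟩
  · rw [Polynomial.degree_prod]
    have : ∀ i ∈ Finset.range j,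
        (C (q⁻¹ ^ i) * (X - C (qInt K q (i : ℤ)))).degree = 1 := by
      intro i _
      rw [degree_mul, degree_C (pow_ne_zero _ (inv_ne_zero hq)), degree_X_sub_C]
      rfl
    rw [Finset.sum_congr rfl this]
    simp
  · intro n
    refine coeff_prod_mem K _ _ _ (fun i _ m => ?_) n
    rw [coeff_C_mul]
    refine Subring.mul_mem _ (Subring.pow_mem _ hqiS i) ?_
    rw [coeff_sub, coeff_X, coeff_C]
    refine Subring.sub_mem _ ?_ ?_
    · split_ifs; exacts [Subring.one_mem _, Subring.zero_mem _]
    · split_ifs with h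
      · exact qInt_mem_closure K q i
      · exact Subring.zero_mem _
  · intro k
    rw [eval_prod]
    refine Finset.prod_congr rfl fun i _ => ?_
    rw [eval_mul, eval_C, eval_sub, eval_X, eval_C]
    exact qInt_sub K q hq k i
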